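/- arXiv:0707.3160 — 2 statements merged into one kernel-verified Lean document; each statement's English description precedes it below -/
import Mathlib

section
/- Let p₀ be a random variable with values in (0,1), not a.s. constant, with E[1/p₀] < ∞, and set ρ₀ = (1 - p₀)/p₀. If E[ρ₀] < 1, then the asymptotic velocity v = (1 - E[ρ₀])/(1 + E[ρ₀]) satisfies 0 < v < E[p₀ - q₀] = 2E[p₀] - 1, where q₀ = 1 - p₀. -/
open MeasureTheory

lemma aux_sq (a b : ℝ) (ha : a ≠ 0) (hb : b ≠ 0) :
    a / b ^ 2 - 2 / b + a⁻¹ = (a - b) ^ 2 / (b ^ 2 * a) := by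
  field_simp
  ring

theorem stmt_6 {Ω : Type*} [MeasurableSpace Ω] (μ : Measure Ω) [IsProbabilityMeasure μ]
    (p : Ω → ℝ)
    (hp : ∀ᵐ ω ∂μ, 0 < p ω ∧ p ω < 1)
    (hnd : ¬ ∃ c : ℝ, p =ᵐ[μ] fun _ => c)
    (hpint : Integrable p μ)
    (hinv : Integrable (fun ω => (p ω)⁻¹) μ)
    (hρ : ∫ ω, (1 - p ω) / p ω ∂μ < 1) :
    0 < (1 - ∫ ω, (1 - p ω) / p ω ∂μ) / (1 + ∫ ω, (1 - p ω) / p ω ∂μ) ∧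
    (1 - ∫ ω, (1 - p ω) / p ω ∂μ) / (1 + ∫ ω, (1 - p ω) / p ω ∂μ)
      < 2 * ∫ ω, p ω ∂μ - 1 := by
  set m := ∫ ω, p ω ∂μ with hm_def
  set I := ∫ ω, (p ω)⁻¹ ∂μ with hI_def
  set R := ∫ ω, (1 - p ω) / p ω ∂μ with hR_def
  -- R = I - 1
  have hae1 : ∀ᵐ ω ∂μ, (1 - p ω) / p ω = (p ω)⁻¹ - 1 := by
    filter_upwards [hp] with ω ⟨h0, _⟩
    field_simp
  have hR : R = I - 1 := by
    rw [hR_def, integral_congr_ae hae1, integral_sub hinv (integrable_const 1),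
      integral_const]
    simp [hI_def]
  -- R ≥ 0
  have hRnn : 0 ≤ R :=
    integral_nonneg_of_ae <| by
      filter_upwards [hp] with ω ⟨h0, h1⟩
      exact div_nonneg (by linarith) h0.le
  -- m > 0
  have hpnn : ∀ᵐ ω ∂μ, 0 ≤ p ω := hp.mono fun ω h => h.1.le
  have hm0 : 0 < m := by
    rcases lt_or_eq_of_le (integral_nonneg_of_ae hpnn) with h | h
    · exact h
    · exfalso
      have hz : p =ᵐ[μ] 0 := (integral_eq_zero_iff_of_nonneg_ae hpnn hpint).mp h.symm
      obtain ⟨ω, h1, h2⟩ := (hp.and hz).exists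
      simp only [Pi.zero_apply] at h2
      exact absurd h2 (ne_of_gt h1.1)
  have hmne : m ≠ 0 := hm0.ne'
  -- auxiliary function
  set f : Ω → ℝ := fun ω => p ω / m ^ 2 - 2 / m + (p ω)⁻¹ with hf_def
  have hf_int : Integrable f μ :=
    ((hpint.div_const _).sub (integrable_const _)).add hinv
  have hf_nn : ∀ᵐ ω ∂μ, 0 ≤ f ω := by
    filter_upwards [hp] with ω ⟨h0, _⟩
    have h : f ω = (p ω - m) ^ 2 / (m ^ 2 * p ω) := aux_sq _ _ h0.ne' hmne
    rw [h]
    positivity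
  have hf_eq : ∫ ω, f ω ∂μ = I - 1 / m := by
    have hint1 : Integrable (fun ω => p ω / m ^ 2 - 2 / m) μ :=
      (hpint.div_const _).sub (integrable_const _)
    have : ∫ ω, f ω ∂μ = (∫ ω, (p ω / m ^ 2 - 2 / m) ∂μ) + ∫ ω, (p ω)⁻¹ ∂μ := by
      rw [← integral_add hint1 hinv]
    rw [this, integral_sub (hpint.div_const _) (integrable_const _),
      integral_div, integral_const]
    simp only [measure_univ, ENNReal.toReal_one, probReal_univ, smul_eq_mul, one_mul]
    rw [← hm_def, ← hI_def]
    field_simp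
    ring
  -- strict inequality I > 1/m
  have hIgt : 1 / m < I := by
    rcases lt_or_eq_of_le (integral_nonneg_of_ae hf_nn) with h | h
    · rw [hf_eq] at h; linarith
    · exfalso
      have hz : f =ᵐ[μ] 0 := (integral_eq_zero_iff_of_nonneg_ae hf_nn hf_int).mp h.symm
      apply hnd
      refine ⟨m, ?_⟩
      filter_upwards [hp, hz] with ω ⟨h0, _⟩ hzω
      simp only [Pi.zero_apply] at hzω
      have h : f ω = (p ω - m) ^ 2 / (m ^ 2 * p ω) := aux_sq _ _ h0.ne' hmne
      rw [h] at hzω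
      have hden : 0 < m ^ 2 * p ω := by positivity
      have hsq : (p ω - m) ^ 2 = 0 := by
        have := div_eq_zero_iff.mp hzω
        rcases this with h' | h'
        · exact h'
        · exact absurd h' hden.ne'
      show p ω = m
      nlinarith [sq_nonneg (p ω - m)]
  have hmI : 1 < m * I := by
    rw [div_lt_iff₀ hm0] at hIgt
    linarith [mul_comm I m]
  have hI0 : 0 < I := lt_trans (by positivity) hIgt
  constructor
  · exact div_pos (by linarith) (by linarith)
  · rw [hR, div_lt_iff₀ (by linarith : (0:ℝ) < 1 + (I - 1))]
    nlinarith
end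

section
/- There exists a distribution of p₀ taking two values β, γ ∈ (0,1) with probabilities α and 1-α such that E[p₀ - q₀] > 0 while E[log((1-p₀)/p₀)] > 0. Specifically, for any α > 1/2 and β with 1/(2α) < β < 1, there exists γ₀ > 0 such that for all 0 < γ < γ₀, taking P{p₀ = β} = α, P{p₀ = γ} = 1-α gives 2E[p₀] - 1 > 0 and α·log((1-β)/β) + (1-α)·log((1-γ)/γ) > 0. -/
theorem stmt_7 (α β : ℝ) (hα : 1 / 2 < α) (hα1 : α < 1)
    (hβ : 1 / (2 * α) < β) (hβ1 : β < 1) :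
    ∃ γ₀ > 0, ∀ γ : ℝ, 0 < γ → γ < γ₀ →
      0 < 2 * (α * β + (1 - α) * γ) - 1 ∧
      0 < α * Real.log ((1 - β) / β) + (1 - α) * Real.log ((1 - γ) / γ) := by
  have hα0 : (0:ℝ) < α := by linarith
  set L := Real.log ((1 - β) / β) with hL
  set K := (-α * L) / (1 - α) with hK
  have h1α : (0:ℝ) < 1 - α := by linarith
  refine ⟨min (1/2) ((1/2) * Real.exp (-(K+1))), ?_, ?_⟩
  · positivity
  intro γ hγ hγlt
  have hγhalf : γ < 1/2 := lt_of_lt_of_le hγlt (min_le_left _ _)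
  constructor
  · have h2 : 1 < 2 * α * β := by
      have := (div_lt_iff₀ (by positivity : (0:ℝ) < 2*α)).mp hβ
      linarith
    nlinarith [mul_pos h1α hγ]
  · have hfrac : Real.exp (K + 1) < (1 - γ) / γ := by
      have hγlt2 : γ < (1/2) * Real.exp (-(K+1)) := lt_of_lt_of_le hγlt (min_le_right _ _)
      have h1 : (1/2) / γ ≤ (1 - γ) / γ := by
        gcongr
        linarith
      have h2 : Real.exp (K + 1) < (1/2) / γ := by
        rw [lt_div_iff₀ hγ]
        have := Real.exp_pos (K + 1)
        have heq : Real.exp (K+1) * ((1/2) * Real.exp (-(K+1))) = 1/2 := by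
          rw [Real.exp_neg]
          field_simp
        nlinarith
      linarith
    have hlog : K + 1 < Real.log ((1 - γ) / γ) := by
      have hpos : (0:ℝ) < (1 - γ) / γ := div_pos (by linarith) hγ
      exact (Real.lt_log_iff_exp_lt hpos).mpr hfrac
    have : (1 - α) * K = -α * L := by
      rw [hK, mul_div_assoc']
      exact mul_div_cancel_left₀ _ h1α.ne'
    nlinarith [mul_lt_mul_of_pos_left hlog h1α]
end
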